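/- Traced evaluation preserves the prefix-labeling invariant: if the environment γ is prefix-labeled and γ, e ⇓ v, T, then v and T are prefix-labeled; moreover if γ and v are prefix-labeled and γ, x ∈ v, e ⇓* v', Θ then v' and Θ are prefix-labeled, dom(Θ) = dom(v), and dom(v) is a sub-prefix code of dom(v'). -/

import Mathlib

/-! Core syntax of multiset-valued NRC with labeled collections. -/

abbrev Label := List ℕ
abbrev Var := String
abbrev FName := String

/-- Values: constants, records, and labeled collections
(finite maps from labels to values, represented as association lists). -/
inductive Value : Type where
  | int : ℤ → Value
  | bool : Bool → Value
  | record : List (FName × Value) → Value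
  | coll : List (Label × Value) → Value

abbrev Env := List (Var × Value)

/-- `ℓ · v` : prepend `ℓ` to every label of a labeled collection. -/
def relabel (ℓ : Label) (ws : List (Label × Value)) : List (Label × Value) :=
  ws.map fun q => (ℓ ++ q.1, q.2)

/-- Sum of a collection of integers (defined only when all elements are integers). -/
def sumColl : List (Label × Value) → Option ℤ
  | [] => some 0
  | (_, .int n) :: t => (sumColl t).map (n + ·)
  | _ => none

/-- NRC expressions. -/
inductive Expr : Type where
  | int : ℤ → Expr
  | bool : Bool → Expr
  | var : Var → Expr
  | prim : (ℤ → ℤ → ℤ) → Expr → Expr → Expr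
  | lett : Var → Expr → Expr → Expr
  | rcd : List (FName × Expr) → Expr
  | proj : Expr → FName → Expr
  | ite : Expr → Expr → Expr → Expr
  | empty : Expr
  | sng : Expr → Expr
  | union : Expr → Expr → Expr
  | comp : Var → Expr → Expr → Expr   -- ⋃ { body | x ∈ src }
  | isEmpty : Expr → Expr
  | sum : Expr → Expr

/-- NRC traces (with a hole, used for slicing). -/
inductive Trace : Type where
  | int : ℤ → Trace
  | bool : Bool → Trace
  | var : Var → Trace
  | prim : (ℤ → ℤ → ℤ) → Trace → Trace → Trace
  | lett : Var → Trace → Trace → Trace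
  | rcd : List (FName × Trace) → Trace
  | proj : Trace → FName → Trace
  | ifThen : Trace → Expr → Expr → Trace → Trace
  | ifElse : Trace → Expr → Expr → Trace → Trace
  | empty : Trace
  | sng : Trace → Trace
  | union : Trace → Trace → Trace
  | comp : Expr → Var → Trace → List (Label × Trace) → Trace
  | isEmpty : Trace → Trace
  | sum : Trace → Trace
  | hole : Trace

/-! Traced evaluation γ, e ⇓ v, T (Figure 2). -/
mutual
inductive Eval : Env → Expr → Value → Trace → Prop where
  | int : ∀ {γ n}, Eval γ (.int n) (.int n) (.int n)
  | bool : ∀ {γ b}, Eval γ (.bool b) (.bool b) (.bool b)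
  | var : ∀ {γ x v}, γ.lookup x = some v → Eval γ (.var x) v (.var x)
  | prim : ∀ {γ f e₁ e₂ n₁ n₂ T₁ T₂},
      Eval γ e₁ (.int n₁) T₁ → Eval γ e₂ (.int n₂) T₂ →
      Eval γ (.prim f e₁ e₂) (.int (f n₁ n₂)) (.prim f T₁ T₂)
  | lett : ∀ {γ x e₁ e₂ v₁ v₂ T₁ T₂},
      Eval γ e₁ v₁ T₁ → Eval ((x, v₁) :: γ) e₂ v₂ T₂ →
      Eval γ (.lett x e₁ e₂) v₂ (.lett x T₁ T₂)
  | rcd : ∀ {γ es vs Ts},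
      EvalFields γ es vs Ts → Eval γ (.rcd es) (.record vs) (.rcd Ts)
  | proj : ∀ {γ e A vs v T},
      Eval γ e (.record vs) T → vs.lookup A = some v →
      Eval γ (.proj e A) v (.proj T A)
  | ifTrue : ∀ {γ e e₁ e₂ v₁ T T₁},
      Eval γ e (.bool true) T → Eval γ e₁ v₁ T₁ →
      Eval γ (.ite e e₁ e₂) v₁ (.ifThen T e₁ e₂ T₁)
  | ifFalse : ∀ {γ e e₁ e₂ v₂ T T₂},
      Eval γ e (.bool false) T → Eval γ e₂ v₂ T₂ →
      Eval γ (.ite e e₁ e₂) v₂ (.ifElse T e₁ e₂ T₂)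
  | empty : ∀ {γ}, Eval γ .empty (.coll []) .empty
  | sng : ∀ {γ e v T}, Eval γ e v T → Eval γ (.sng e) (.coll [([], v)]) (.sng T)
  | union : ∀ {γ e₁ e₂ w₁ w₂ T₁ T₂},
      Eval γ e₁ (.coll w₁) T₁ → Eval γ e₂ (.coll w₂) T₂ →
      Eval γ (.union e₁ e₂) (.coll (relabel [1] w₁ ++ relabel [2] w₂)) (.union T₁ T₂)
  | comp : ∀ {γ x ebody esrc w w' T Θ},
      Eval γ esrc (.coll w) T → EvalStar γ x ebody w w' Θ →
      Eval γ (.comp x ebody esrc) (.coll w') (.comp ebody x T Θ)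
  | isEmptyT : ∀ {γ e T},
      Eval γ e (.coll []) T → Eval γ (.isEmpty e) (.bool true) (.isEmpty T)
  | isEmptyF : ∀ {γ e w T},
      Eval γ e (.coll w) T → w ≠ [] →
      Eval γ (.isEmpty e) (.bool false) (.isEmpty T)
  | sum : ∀ {γ e w n T},
      Eval γ e (.coll w) T → sumColl w = some n →
      Eval γ (.sum e) (.int n) (.sum T)

/-- Iteration judgment γ, x ∈ v, e ⇓* v', Θ. -/
inductive EvalStar : Env → Var → Expr → List (Label × Value) →
    List (Label × Value) → List (Label × Trace) → Prop where
  | nil : ∀ {γ x e}, EvalStar γ x e [] [] []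
  | cons : ∀ {γ x e ℓ v rest w w' T Θ},
      Eval ((x, v) :: γ) e (.coll w) T → EvalStar γ x e rest w' Θ →
      EvalStar γ x e ((ℓ, v) :: rest) (relabel ℓ w ++ w') ((ℓ, T) :: Θ)

inductive EvalFields : Env → List (FName × Expr) → List (FName × Value) →
    List (FName × Trace) → Prop where
  | nil : ∀ {γ}, EvalFields γ [] [] []
  | cons : ∀ {γ A e es v vs T Ts},
      Eval γ e v T → EvalFields γ es vs Ts →
      EvalFields γ ((A, e) :: es) ((A, v) :: vs) ((A, T) :: Ts)
end

/-! Trace replay γ, T ↷ v (Figure 3). -/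
mutual
inductive Replay : Env → Trace → Value → Prop where
  | int : ∀ {γ n}, Replay γ (.int n) (.int n)
  | bool : ∀ {γ b}, Replay γ (.bool b) (.bool b)
  | var : ∀ {γ x v}, γ.lookup x = some v → Replay γ (.var x) v
  | prim : ∀ {γ f T₁ T₂ n₁ n₂},
      Replay γ T₁ (.int n₁) → Replay γ T₂ (.int n₂) →
      Replay γ (.prim f T₁ T₂) (.int (f n₁ n₂))
  | lett : ∀ {γ x T₁ T₂ v₁ v₂},
      Replay γ T₁ v₁ → Replay ((x, v₁) :: γ) T₂ v₂ →
      Replay γ (.lett x T₁ T₂) v₂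
  | rcd : ∀ {γ Ts vs}, ReplayFields γ Ts vs → Replay γ (.rcd Ts) (.record vs)
  | proj : ∀ {γ T A vs v},
      Replay γ T (.record vs) → vs.lookup A = some v → Replay γ (.proj T A) v
  | ifThen : ∀ {γ T e₁ e₂ T₁ v₁},
      Replay γ T (.bool true) → Replay γ T₁ v₁ →
      Replay γ (.ifThen T e₁ e₂ T₁) v₁
  | ifElse : ∀ {γ T e₁ e₂ T₂ v₂},
      Replay γ T (.bool false) → Replay γ T₂ v₂ →
      Replay γ (.ifElse T e₁ e₂ T₂) v₂
  | empty : ∀ {γ}, Replay γ .empty (.coll [])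
  | sng : ∀ {γ T v}, Replay γ T v → Replay γ (.sng T) (.coll [([], v)])
  | union : ∀ {γ T₁ T₂ w₁ w₂},
      Replay γ T₁ (.coll w₁) → Replay γ T₂ (.coll w₂) →
      Replay γ (.union T₁ T₂) (.coll (relabel [1] w₁ ++ relabel [2] w₂))
  | comp : ∀ {γ e x T Θ w w'},
      Replay γ T (.coll w) → ReplayStar γ x w Θ w' →
      Replay γ (.comp e x T Θ) (.coll w')
  | isEmptyT : ∀ {γ T},
      Replay γ T (.coll []) → Replay γ (.isEmpty T) (.bool true)
  | isEmptyF : ∀ {γ T w},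
      Replay γ T (.coll w) → w ≠ [] → Replay γ (.isEmpty T) (.bool false)
  | sum : ∀ {γ T w n},
      Replay γ T (.coll w) → sumColl w = some n → Replay γ (.sum T) (.int n)

/-- Iterated replay γ, x ∈ v, Θ ↷* v'. -/
inductive ReplayStar : Env → Var → List (Label × Value) →
    List (Label × Trace) → List (Label × Value) → Prop where
  | nil : ∀ {γ x Θ}, ReplayStar γ x [] Θ []
  | cons : ∀ {γ x ℓ v rest Θ T w w'},
      Θ.lookup ℓ = some T → Replay ((x, v) :: γ) T (.coll w) →
      ReplayStar γ x rest Θ w' →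
      ReplayStar γ x ((ℓ, v) :: rest) Θ (relabel ℓ w ++ w')

inductive ReplayFields : Env → List (FName × Trace) → List (FName × Value) → Prop where
  | nil : ∀ {γ}, ReplayFields γ [] []
  | cons : ∀ {γ A T Ts v vs},
      Replay γ T v → ReplayFields γ Ts vs →
      ReplayFields γ ((A, T) :: Ts) ((A, v) :: vs)
end

def IsPrefixCode (L : Set Label) : Prop :=
  ∀ x ∈ L, ∀ y ∈ L, x <+: y → x = y

/-- The domain (set of labels) of a labeled collection (or trace set). -/
def domOf {β : Type*} (ws : List (Label × β)) : Set Label :=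
  {ℓ | ∃ b, (ℓ, b) ∈ ws}

/-- `L'` is a sub-prefix code of `L`. -/
def SubPrefixCode (L' L : Set Label) : Prop :=
  IsPrefixCode L' ∧ ∀ x ∈ L, ∃ y ∈ L', y <+: x

/-- A value is prefix-labeled if every collection occurring in it has
distinct labels forming a prefix code. -/
inductive PLValue : Value → Prop where
  | int : ∀ {n}, PLValue (.int n)
  | bool : ∀ {b}, PLValue (.bool b)
  | record : ∀ {vs : List (FName × Value)},
      (∀ q ∈ vs, PLValue q.2) → PLValue (.record vs)
  | coll : ∀ {ws : List (Label × Value)},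
      (ws.map Prod.fst).Nodup → IsPrefixCode (domOf ws) →
      (∀ q ∈ ws, PLValue q.2) → PLValue (.coll ws)

def PLEnv (γ : Env) : Prop := ∀ q ∈ γ, PLValue q.2

/-- A trace is prefix-labeled if every labeled trace set occurring in it has
distinct labels forming a prefix code. -/
inductive PLTrace : Trace → Prop where
  | int : ∀ {n}, PLTrace (.int n)
  | bool : ∀ {b}, PLTrace (.bool b)
  | var : ∀ {x}, PLTrace (.var x)
  | prim : ∀ {f T₁ T₂}, PLTrace T₁ → PLTrace T₂ → PLTrace (.prim f T₁ T₂)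
  | lett : ∀ {x T₁ T₂}, PLTrace T₁ → PLTrace T₂ → PLTrace (.lett x T₁ T₂)
  | rcd : ∀ {Ts : List (FName × Trace)},
      (∀ q ∈ Ts, PLTrace q.2) → PLTrace (.rcd Ts)
  | proj : ∀ {T A}, PLTrace T → PLTrace (.proj T A)
  | ifThen : ∀ {T e₁ e₂ T₁}, PLTrace T → PLTrace T₁ → PLTrace (.ifThen T e₁ e₂ T₁)
  | ifElse : ∀ {T e₁ e₂ T₂}, PLTrace T → PLTrace T₂ → PLTrace (.ifElse T e₁ e₂ T₂)
  | empty : PLTrace .empty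
  | sng : ∀ {T}, PLTrace T → PLTrace (.sng T)
  | union : ∀ {T₁ T₂}, PLTrace T₁ → PLTrace T₂ → PLTrace (.union T₁ T₂)
  | comp : ∀ {e x T} {Θ : List (Label × Trace)},
      PLTrace T → (Θ.map Prod.fst).Nodup → IsPrefixCode (domOf Θ) →
      (∀ q ∈ Θ, PLTrace q.2) → PLTrace (.comp e x T Θ)
  | isEmpty : ∀ {T}, PLTrace T → PLTrace (.isEmpty T)
  | sum : ∀ {T}, PLTrace T → PLTrace (.sum T)
  | hole : PLTrace .hole

/-- A labeled trace set is prefix-labeled. -/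
def PLTraceSet (Θ : List (Label × Trace)) : Prop :=
  (Θ.map Prod.fst).Nodup ∧ IsPrefixCode (domOf Θ) ∧ ∀ q ∈ Θ, PLTrace q.2

section Helpers

lemma lookup_mem' {α β : Type _} [BEq α] [LawfulBEq α] {l : List (α × β)} {k : α} {v : β}
    (h : l.lookup k = some v) : (k, v) ∈ l := by
  induction l with
  | nil => simp [List.lookup] at h
  | cons p t ih =>
    obtain ⟨a, b⟩ := p
    rw [List.lookup_cons] at h
    by_cases hk : k = a
    · subst hk; simp at h; subst h; exact List.mem_cons_self
    · have hb : (k == a) = false := beq_false_of_ne hk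
      simp [hb] at h
      exact List.mem_cons_of_mem _ (ih h)

lemma mem_domOf {β : Type _} {ws : List (Label × β)} {ℓ : Label} :
    ℓ ∈ domOf ws ↔ ℓ ∈ ws.map Prod.fst := by
  constructor
  · rintro ⟨b, hb⟩; exact List.mem_map.2 ⟨(ℓ, b), hb, rfl⟩
  · intro h; rcases List.mem_map.1 h with ⟨⟨a, b⟩, hb, rfl⟩; exact ⟨b, hb⟩

lemma domOf_nil {β : Type _} : domOf ([] : List (Label × β)) = ∅ := by
  ext ℓ; simp [domOf]

lemma domOf_cons {β : Type _} {p : Label × β} {l : List (Label × β)} :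
    domOf (p :: l) = insert p.1 (domOf l) := by
  ext ℓ; obtain ⟨a, b⟩ := p
  simp only [domOf, Set.mem_setOf_eq, List.mem_cons, Set.mem_insert_iff, Prod.mk.injEq]
  aesop

lemma domOf_append {β : Type _} {l₁ l₂ : List (Label × β)} :
    domOf (l₁ ++ l₂) = domOf l₁ ∪ domOf l₂ := by
  ext ℓ
  simp only [domOf, Set.mem_setOf_eq, List.mem_append, Set.mem_union]
  constructor
  · rintro ⟨b, hb | hb⟩
    · exact Or.inl ⟨b, hb⟩
    · exact Or.inr ⟨b, hb⟩
  · rintro (⟨b, hb⟩ | ⟨b, hb⟩)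
    · exact ⟨b, Or.inl hb⟩
    · exact ⟨b, Or.inr hb⟩

lemma relabel_map_fst {ℓ : Label} {w : List (Label × Value)} :
    (relabel ℓ w).map Prod.fst = (w.map Prod.fst).map (ℓ ++ ·) := by
  simp [relabel, List.map_map]

lemma domOf_relabel {ℓ : Label} {w : List (Label × Value)} :
    domOf (relabel ℓ w) = (ℓ ++ ·) '' domOf w := by
  ext m
  rw [mem_domOf, relabel_map_fst]
  constructor
  · intro h
    rcases List.mem_map.1 h with ⟨a, ha, rfl⟩
    exact ⟨a, mem_domOf.2 ha, rfl⟩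
  · rintro ⟨a, ha, rfl⟩
    exact List.mem_map.2 ⟨a, mem_domOf.1 ha, rfl⟩

lemma relabel_mem_snd {ℓ : Label} {w : List (Label × Value)} {q : Label × Value}
    (h : q ∈ relabel ℓ w) : ∃ a, (a, q.2) ∈ w := by
  rcases List.mem_map.1 h with ⟨⟨a, b⟩, hb, rfl⟩
  exact ⟨a, hb⟩

lemma IsPrefixCode_empty : IsPrefixCode (∅ : Set Label) := by
  intro x hx; exact absurd hx (Set.notMem_empty x)

lemma incomp {ℓ ℓ' m : Label} {L : Set Label} (hpc : IsPrefixCode L)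
    (hℓ : ℓ ∈ L) (hℓ' : ℓ' ∈ L) (hne : ℓ ≠ ℓ')
    (h1 : ℓ <+: m) (h2 : ℓ' <+: m) : False := by
  rcases List.prefix_or_prefix_of_prefix h1 h2 with h | h
  · exact hne (hpc _ hℓ _ hℓ' h)
  · exact hne ((hpc _ hℓ' _ hℓ h).symm)

lemma relabel_PL {ℓ : Label} {w : List (Label × Value)}
    (h : PLValue (.coll w)) : PLValue (.coll (relabel ℓ w)) := by
  cases h with
  | coll hnd hpc hv =>
  refine PLValue.coll ?_ ?_ ?_
  · rw [relabel_map_fst]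
    exact hnd.map (fun a b hab => List.append_cancel_left hab)
  · rw [domOf_relabel]
    rintro x ⟨a, ha, rfl⟩ y ⟨b, hb, rfl⟩ hxy
    rw [List.prefix_append_right_inj] at hxy
    exact congrArg _ (hpc _ ha _ hb hxy)
  · intro q hq
    rcases relabel_mem_snd hq with ⟨a, ha⟩
    exact hv (a, q.2) ha

lemma coll_append_PL {w₁ w₂ : List (Label × Value)}
    (h₁ : PLValue (.coll w₁)) (h₂ : PLValue (.coll w₂))
    (hcross : ∀ x ∈ domOf w₁, ∀ y ∈ domOf w₂, ¬ x <+: y ∧ ¬ y <+: x) :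
    PLValue (.coll (w₁ ++ w₂)) := by
  cases h₁ with
  | coll hnd₁ hpc₁ hv₁ =>
  cases h₂ with
  | coll hnd₂ hpc₂ hv₂ =>
  refine PLValue.coll ?_ ?_ ?_
  · rw [List.map_append]
    refine List.Nodup.append hnd₁ hnd₂ ?_
    intro a ha hb
    exact (hcross a (mem_domOf.2 ha) a (mem_domOf.2 hb)).1 (List.prefix_refl a)
  · rw [domOf_append]
    rintro x (hx | hx) y (hy | hy) hxy
    · exact hpc₁ _ hx _ hy hxy
    · exact absurd hxy (hcross _ hx _ hy).1
    · exact absurd hxy (hcross _ hy _ hx).2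
    · exact hpc₂ _ hx _ hy hxy
  · intro q hq
    rcases List.mem_append.1 hq with h | h
    · exact hv₁ _ h
    · exact hv₂ _ h

end Helpers

section Cases

lemma PLEnv_cons {γ : Env} {x : Var} {v : Value} (hv : PLValue v) (hγ : PLEnv γ) :
    PLEnv ((x, v) :: γ) := by
  rintro q hq
  rcases List.mem_cons.1 hq with rfl | hq
  · exact hv
  · exact hγ q hq

lemma code_subset {L' L : Set Label} (hs : L' ⊆ L) (h : IsPrefixCode L) :
    IsPrefixCode L' := fun x hx y hy hxy => h x (hs hx) y (hs hy) hxy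

lemma PL_coll_nil : PLValue (.coll []) := by
  refine PLValue.coll (by simp) ?_ (by simp)
  rw [domOf_nil]; exact IsPrefixCode_empty

lemma PL_coll_sng {v : Value} (hv : PLValue v) : PLValue (.coll [(([] : Label), v)]) := by
  refine PLValue.coll (by simp) ?_ ?_
  · rw [domOf_cons, domOf_nil]
    rintro x hx y hy _
    simp only [Set.mem_insert_iff, Set.mem_empty_iff_false, or_false] at hx hy
    rw [hx, hy]
  · rintro q hq
    rcases List.mem_cons.1 hq with rfl | hq
    · exact hv
    · simp at hq

lemma union_PL {w₁ w₂ : List (Label × Value)}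
    (h₁ : PLValue (.coll w₁)) (h₂ : PLValue (.coll w₂)) :
    PLValue (.coll (relabel [1] w₁ ++ relabel [2] w₂)) := by
  refine coll_append_PL (relabel_PL h₁) (relabel_PL h₂) ?_
  intro a ha b hb
  rw [domOf_relabel] at ha hb
  obtain ⟨a₀, -, rfl⟩ := ha
  obtain ⟨b₀, -, rfl⟩ := hb
  simp only [List.cons_append, List.nil_append]
  constructor
  · intro h; exact absurd (List.cons_prefix_cons.1 h).1 (by norm_num)
  · intro h; exact absurd (List.cons_prefix_cons.1 h).1 (by norm_num)

/-- The key case: EvalStar.cons preserves the invariant. -/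
lemma star_cons_case {γ : Env} {x : Var} {ℓ : Label} {v : Value}
    {rest w w' : List (Label × Value)} {T : Trace} {Θ : List (Label × Trace)}
    (ih₁ : PLEnv ((x, v) :: γ) → PLValue (.coll w) ∧ PLTrace T)
    (ih₂ : PLEnv γ → PLValue (.coll rest) →
      PLValue (.coll w') ∧ PLTraceSet Θ ∧ domOf Θ = domOf rest ∧
        SubPrefixCode (domOf rest) (domOf w'))
    (hγ : PLEnv γ) (hcons : PLValue (.coll ((ℓ, v) :: rest))) :
    PLValue (.coll (relabel ℓ w ++ w')) ∧ PLTraceSet ((ℓ, T) :: Θ) ∧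
      domOf ((ℓ, T) :: Θ) = domOf ((ℓ, v) :: rest) ∧
      SubPrefixCode (domOf ((ℓ, v) :: rest)) (domOf (relabel ℓ w ++ w')) := by
  cases hcons with
  | coll hnd hpc hv =>
  have hvv : PLValue v := hv (ℓ, v) List.mem_cons_self
  obtain ⟨hw, hT⟩ := ih₁ (PLEnv_cons hvv hγ)
  have hndc : ℓ ∉ rest.map Prod.fst ∧ (rest.map Prod.fst).Nodup := by
    rw [List.map_cons, List.nodup_cons] at hnd; exact hnd
  have hsubset : domOf rest ⊆ domOf ((ℓ, v) :: rest) := by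
    rw [domOf_cons]; exact Set.subset_insert _ _
  have hrest : PLValue (.coll rest) :=
    PLValue.coll hndc.2 (code_subset hsubset hpc)
      (fun q hq => hv q (List.mem_cons_of_mem _ hq))
  obtain ⟨hw', hΘ, hdom, hsub⟩ := ih₂ hγ hrest
  have ℓmem : ℓ ∈ domOf ((ℓ, v) :: rest) := by
    rw [domOf_cons]; exact Set.mem_insert _ _
  have hne : ∀ ℓ' ∈ domOf rest, ℓ ≠ ℓ' := by
    rintro ℓ' hℓ' rfl; exact hndc.1 (mem_domOf.1 hℓ')
  have noPrefix : ∀ m ∈ domOf w', ¬ ℓ <+: m := by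
    intro m hm hpre
    obtain ⟨ℓ', hℓ', hp'⟩ := hsub.2 m hm
    exact incomp hpc ℓmem (hsubset hℓ') (hne ℓ' hℓ') hpre hp'
  have cross : ∀ a ∈ domOf (relabel ℓ w), ∀ b ∈ domOf w', ¬ a <+: b ∧ ¬ b <+: a := by
    intro a ha b hb
    rw [domOf_relabel] at ha
    obtain ⟨a₀, -, rfl⟩ := ha
    constructor
    · intro hab; exact noPrefix b hb ((List.prefix_append ℓ a₀).trans hab)
    · intro hba
      obtain ⟨ℓ', hℓ', hpb⟩ := hsub.2 b hb
      exact incomp hpc ℓmem (hsubset hℓ') (hne ℓ' hℓ')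
        (List.prefix_append ℓ a₀) (hpb.trans hba)
  refine ⟨coll_append_PL (relabel_PL hw) hw' cross, ⟨?_, ?_, ?_⟩, ?_, hpc, ?_⟩
  · rw [List.map_cons, List.nodup_cons]
    refine ⟨?_, hΘ.1⟩
    intro hmem
    have : ℓ ∈ domOf rest := by rw [← hdom]; exact mem_domOf.2 hmem
    exact hne ℓ this rfl
  · have : domOf ((ℓ, T) :: Θ) = domOf ((ℓ, v) :: rest) := by
      rw [domOf_cons, domOf_cons, hdom]
    rw [this]; exact hpc
  · rintro q hq
    rcases List.mem_cons.1 hq with rfl | hq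
    · exact hT
    · exact hΘ.2.2 q hq
  · rw [domOf_cons, domOf_cons, hdom]
  · intro m hm
    rw [domOf_append] at hm
    rcases hm with hm | hm
    · rw [domOf_relabel] at hm
      obtain ⟨a₀, -, rfl⟩ := hm
      exact ⟨ℓ, ℓmem, List.prefix_append ℓ a₀⟩
    · obtain ⟨ℓ', hℓ', hp⟩ := hsub.2 m hm
      exact ⟨ℓ', hsubset hℓ', hp⟩

lemma star_nil_case :
    PLValue (.coll ([] : List (Label × Value))) ∧
      PLTraceSet ([] : List (Label × Trace)) ∧
      domOf ([] : List (Label × Trace)) = domOf ([] : List (Label × Value)) ∧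
      SubPrefixCode (domOf ([] : List (Label × Value)))
        (domOf ([] : List (Label × Value))) := by
  refine ⟨PL_coll_nil, ⟨by simp, ?_, by simp⟩, ?_, ?_, ?_⟩
  · rw [domOf_nil]; exact IsPrefixCode_empty
  · rw [domOf_nil, domOf_nil]
  · rw [domOf_nil]; exact IsPrefixCode_empty
  · intro x hx; rw [domOf_nil] at hx; exact absurd hx (Set.notMem_empty x)

end Cases

/-- Theorem 2.2: traced evaluation preserves the prefix-labeling invariant. -/
theorem eval_prefix_labeled :
    (∀ (γ : Env) (e : Expr) (v : Value) (T : Trace),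
      PLEnv γ → Eval γ e v T → PLValue v ∧ PLTrace T) ∧
    (∀ (γ : Env) (x : Var) (e : Expr) (w w' : List (Label × Value))
        (Θ : List (Label × Trace)),
      PLEnv γ → PLValue (.coll w) → EvalStar γ x e w w' Θ →
      PLValue (.coll w') ∧ PLTraceSet Θ ∧
        domOf Θ = domOf w ∧ SubPrefixCode (domOf w) (domOf w')) := by
  -- shared minor premises for the mutual recursors
  have Cint : ∀ {γ : Env} {n : ℤ}, PLEnv γ → PLValue (.int n) ∧ PLTrace (.int n) :=
    fun _ => ⟨.int, .int⟩
  have Cbool : ∀ {γ : Env} {b : Bool}, PLEnv γ → PLValue (.bool b) ∧ PLTrace (.bool b) :=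
    fun _ => ⟨.bool, .bool⟩
  have Cvar : ∀ {γ : Env} {x : Var} {v : Value}, γ.lookup x = some v →
      PLEnv γ → PLValue v ∧ PLTrace (.var x) :=
    fun h hγ => ⟨hγ _ (lookup_mem' h), .var⟩
  have Cprim : ∀ {γ : Env} {f : ℤ → ℤ → ℤ} {e₁ e₂ : Expr} {n₁ n₂ : ℤ} {T₁ T₂ : Trace},
      Eval γ e₁ (.int n₁) T₁ → Eval γ e₂ (.int n₂) T₂ →
      (PLEnv γ → PLValue (.int n₁) ∧ PLTrace T₁) →
      (PLEnv γ → PLValue (.int n₂) ∧ PLTrace T₂) →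
      PLEnv γ → PLValue (.int (f n₁ n₂)) ∧ PLTrace (.prim f T₁ T₂) :=
    fun _ _ ih₁ ih₂ hγ => ⟨.int, .prim (ih₁ hγ).2 (ih₂ hγ).2⟩
  have Clett : ∀ {γ : Env} {x : Var} {e₁ e₂ : Expr} {v₁ v₂ : Value} {T₁ T₂ : Trace},
      Eval γ e₁ v₁ T₁ → Eval ((x, v₁) :: γ) e₂ v₂ T₂ →
      (PLEnv γ → PLValue v₁ ∧ PLTrace T₁) →
      (PLEnv ((x, v₁) :: γ) → PLValue v₂ ∧ PLTrace T₂) →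
      PLEnv γ → PLValue v₂ ∧ PLTrace (.lett x T₁ T₂) := by
    intro γ x e₁ e₂ v₁ v₂ T₁ T₂ _ _ ih₁ ih₂ hγ
    obtain ⟨h₁, hT₁⟩ := ih₁ hγ
    obtain ⟨h₂, hT₂⟩ := ih₂ (PLEnv_cons h₁ hγ)
    exact ⟨h₂, .lett hT₁ hT₂⟩
  have Crcd : ∀ {γ : Env} {es : List (FName × Expr)} {vs : List (FName × Value)}
      {Ts : List (FName × Trace)}, EvalFields γ es vs Ts →
      (PLEnv γ → (∀ q ∈ vs, PLValue q.2) ∧ (∀ q ∈ Ts, PLTrace q.2)) →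
      PLEnv γ → PLValue (.record vs) ∧ PLTrace (.rcd Ts) :=
    fun _ ih hγ => ⟨.record (ih hγ).1, .rcd (ih hγ).2⟩
  have Cproj : ∀ {γ : Env} {e : Expr} {A : FName} {vs : List (FName × Value)}
      {v : Value} {T : Trace}, Eval γ e (.record vs) T → vs.lookup A = some v →
      (PLEnv γ → PLValue (.record vs) ∧ PLTrace T) →
      PLEnv γ → PLValue v ∧ PLTrace (.proj T A) := by
    intro γ e A vs v T _ hlk ih hγ
    obtain ⟨hr, hT⟩ := ih hγ
    cases hr with
    | record hr => exact ⟨hr _ (lookup_mem' hlk), .proj hT⟩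
  have CifT : ∀ {γ : Env} {e e₁ e₂ : Expr} {v₁ : Value} {T T₁ : Trace},
      Eval γ e (.bool true) T → Eval γ e₁ v₁ T₁ →
      (PLEnv γ → PLValue (.bool true) ∧ PLTrace T) →
      (PLEnv γ → PLValue v₁ ∧ PLTrace T₁) →
      PLEnv γ → PLValue v₁ ∧ PLTrace (.ifThen T e₁ e₂ T₁) :=
    fun _ _ ih ih₁ hγ => ⟨(ih₁ hγ).1, .ifThen (ih hγ).2 (ih₁ hγ).2⟩
  have CifF : ∀ {γ : Env} {e e₁ e₂ : Expr} {v₂ : Value} {T T₂ : Trace},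
      Eval γ e (.bool false) T → Eval γ e₂ v₂ T₂ →
      (PLEnv γ → PLValue (.bool false) ∧ PLTrace T) →
      (PLEnv γ → PLValue v₂ ∧ PLTrace T₂) →
      PLEnv γ → PLValue v₂ ∧ PLTrace (.ifElse T e₁ e₂ T₂) :=
    fun _ _ ih ih₂ hγ => ⟨(ih₂ hγ).1, .ifElse (ih hγ).2 (ih₂ hγ).2⟩
  have Cempty : ∀ {γ : Env}, PLEnv γ → PLValue (.coll []) ∧ PLTrace .empty :=
    fun _ => ⟨PL_coll_nil, .empty⟩
  have Csng : ∀ {γ : Env} {e : Expr} {v : Value} {T : Trace}, Eval γ e v T →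
      (PLEnv γ → PLValue v ∧ PLTrace T) →
      PLEnv γ → PLValue (.coll [(([] : Label), v)]) ∧ PLTrace (.sng T) :=
    fun _ ih hγ => ⟨PL_coll_sng (ih hγ).1, .sng (ih hγ).2⟩
  have Cunion : ∀ {γ : Env} {e₁ e₂ : Expr} {w₁ w₂ : List (Label × Value)} {T₁ T₂ : Trace},
      Eval γ e₁ (.coll w₁) T₁ → Eval γ e₂ (.coll w₂) T₂ →
      (PLEnv γ → PLValue (.coll w₁) ∧ PLTrace T₁) →
      (PLEnv γ → PLValue (.coll w₂) ∧ PLTrace T₂) →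
      PLEnv γ → PLValue (.coll (relabel [1] w₁ ++ relabel [2] w₂)) ∧ PLTrace (.union T₁ T₂) :=
    fun _ _ ih₁ ih₂ hγ =>
      ⟨union_PL (ih₁ hγ).1 (ih₂ hγ).1, .union (ih₁ hγ).2 (ih₂ hγ).2⟩
  have Ccomp : ∀ {γ : Env} {x : Var} {ebody esrc : Expr} {w w' : List (Label × Value)}
      {T : Trace} {Θ : List (Label × Trace)},
      Eval γ esrc (.coll w) T → EvalStar γ x ebody w w' Θ →
      (PLEnv γ → PLValue (.coll w) ∧ PLTrace T) →
      (PLEnv γ → PLValue (.coll w) →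
        PLValue (.coll w') ∧ PLTraceSet Θ ∧ domOf Θ = domOf w ∧
          SubPrefixCode (domOf w) (domOf w')) →
      PLEnv γ → PLValue (.coll w') ∧ PLTrace (.comp ebody x T Θ) := by
    intro γ x ebody esrc w w' T Θ _ _ ih₁ ih₂ hγ
    obtain ⟨hw, hT⟩ := ih₁ hγ
    obtain ⟨hw', hΘ, -, -⟩ := ih₂ hγ hw
    exact ⟨hw', .comp hT hΘ.1 hΘ.2.1 hΘ.2.2⟩
  have CisET : ∀ {γ : Env} {e : Expr} {T : Trace}, Eval γ e (.coll []) T →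
      (PLEnv γ → PLValue (.coll []) ∧ PLTrace T) →
      PLEnv γ → PLValue (.bool true) ∧ PLTrace (.isEmpty T) :=
    fun _ ih hγ => ⟨.bool, .isEmpty (ih hγ).2⟩
  have CisEF : ∀ {γ : Env} {e : Expr} {w : List (Label × Value)} {T : Trace},
      Eval γ e (.coll w) T → w ≠ [] →
      (PLEnv γ → PLValue (.coll w) ∧ PLTrace T) →
      PLEnv γ → PLValue (.bool false) ∧ PLTrace (.isEmpty T) :=
    fun _ _ ih hγ => ⟨.bool, .isEmpty (ih hγ).2⟩
  have Csum : ∀ {γ : Env} {e : Expr} {w : List (Label × Value)} {n : ℤ} {T : Trace},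
      Eval γ e (.coll w) T → sumColl w = some n →
      (PLEnv γ → PLValue (.coll w) ∧ PLTrace T) →
      PLEnv γ → PLValue (.int n) ∧ PLTrace (.sum T) :=
    fun _ _ ih hγ => ⟨.int, .sum (ih hγ).2⟩
  have Csnil : ∀ {γ : Env} {x : Var} {e : Expr},
      PLEnv γ → PLValue (.coll ([] : List (Label × Value))) →
      PLValue (.coll ([] : List (Label × Value))) ∧
        PLTraceSet ([] : List (Label × Trace)) ∧
        domOf ([] : List (Label × Trace)) = domOf ([] : List (Label × Value)) ∧
        SubPrefixCode (domOf ([] : List (Label × Value)))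
          (domOf ([] : List (Label × Value))) :=
    fun _ _ => star_nil_case
  have Cscons : ∀ {γ : Env} {x : Var} {e : Expr} {ℓ : Label} {v : Value}
      {rest w w' : List (Label × Value)} {T : Trace} {Θ : List (Label × Trace)},
      Eval ((x, v) :: γ) e (.coll w) T → EvalStar γ x e rest w' Θ →
      (PLEnv ((x, v) :: γ) → PLValue (.coll w) ∧ PLTrace T) →
      (PLEnv γ → PLValue (.coll rest) →
        PLValue (.coll w') ∧ PLTraceSet Θ ∧ domOf Θ = domOf rest ∧
          SubPrefixCode (domOf rest) (domOf w')) →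
      PLEnv γ → PLValue (.coll ((ℓ, v) :: rest)) →
      PLValue (.coll (relabel ℓ w ++ w')) ∧ PLTraceSet ((ℓ, T) :: Θ) ∧
        domOf ((ℓ, T) :: Θ) = domOf ((ℓ, v) :: rest) ∧
        SubPrefixCode (domOf ((ℓ, v) :: rest)) (domOf (relabel ℓ w ++ w')) :=
    fun _ _ ih₁ ih₂ hγ hc => star_cons_case ih₁ ih₂ hγ hc
  have Cfnil : ∀ {γ : Env}, PLEnv γ →
      (∀ q ∈ ([] : List (FName × Value)), PLValue q.2) ∧
      (∀ q ∈ ([] : List (FName × Trace)), PLTrace q.2) :=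
    fun _ => ⟨by simp, by simp⟩
  have Cfcons : ∀ {γ : Env} {A : FName} {e : Expr} {es : List (FName × Expr)}
      {v : Value} {vs : List (FName × Value)} {T : Trace} {Ts : List (FName × Trace)},
      Eval γ e v T → EvalFields γ es vs Ts →
      (PLEnv γ → PLValue v ∧ PLTrace T) →
      (PLEnv γ → (∀ q ∈ vs, PLValue q.2) ∧ (∀ q ∈ Ts, PLTrace q.2)) →
      PLEnv γ → (∀ q ∈ (A, v) :: vs, PLValue q.2) ∧
        (∀ q ∈ (A, T) :: Ts, PLTrace q.2) := by
    intro γ A e es v vs T Ts _ _ ih ihs hγ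
    obtain ⟨h₁, h₂⟩ := ihs hγ
    constructor
    · rintro q hq
      rcases List.mem_cons.1 hq with rfl | hq
      · exact (ih hγ).1
      · exact h₁ q hq
    · rintro q hq
      rcases List.mem_cons.1 hq with rfl | hq
      · exact (ih hγ).2
      · exact h₂ q hq
  constructor
  · intro γ e v T hγ h
    exact Eval.rec
      (motive_1 := fun γ e v T _ => PLEnv γ → PLValue v ∧ PLTrace T)
      (motive_2 := fun γ x e w w' Θ _ => PLEnv γ → PLValue (.coll w) →
        PLValue (.coll w') ∧ PLTraceSet Θ ∧ domOf Θ = domOf w ∧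
          SubPrefixCode (domOf w) (domOf w'))
      (motive_3 := fun γ es vs Ts _ => PLEnv γ →
        (∀ q ∈ vs, PLValue q.2) ∧ (∀ q ∈ Ts, PLTrace q.2))
      Cint Cbool Cvar Cprim Clett Crcd Cproj CifT CifF Cempty Csng Cunion Ccomp
      CisET CisEF Csum (fun {γ} {x} {e} => Csnil (γ := γ) (x := x) (e := e)) Cscons Cfnil Cfcons h hγ
  · intro γ x e w w' Θ hγ hw h
    exact EvalStar.rec
      (motive_1 := fun γ e v T _ => PLEnv γ → PLValue v ∧ PLTrace T)
      (motive_2 := fun γ x e w w' Θ _ => PLEnv γ → PLValue (.coll w) →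
        PLValue (.coll w') ∧ PLTraceSet Θ ∧ domOf Θ = domOf w ∧
          SubPrefixCode (domOf w) (domOf w'))
      (motive_3 := fun γ es vs Ts _ => PLEnv γ →
        (∀ q ∈ vs, PLValue q.2) ∧ (∀ q ∈ Ts, PLTrace q.2))
      Cint Cbool Cvar Cprim Clett Crcd Cproj CifT CifF Cempty Csng Cunion Ccomp
      CisET CisEF Csum (fun {γ} {x} {e} => Csnil (γ := γ) (x := x) (e := e)) Cscons Cfnil Cfcons h hγ hw
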